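/- For 0 < θ < π, the map u ↦ cos(θ) + sin(θ)u is a quandle isomorphism from the spherical quandle S²_ψ with ψ = 2π - 2θ (operation: u * v = rotation of u about v by ψ) to the conjugacy class C̃_θ = { cos(θ) + sin(θ)v : v ∈ S² } in the unit quaternions, equipped with the conjugation quandle operation p * q = q⁻¹ p q. -/

import Mathlib

open Quaternion
noncomputable section

/-- A pure unit quaternion: zero real part and norm 1 (identified with a point of `S²`). -/
def IsPureUnit (u : ℍ[ℝ]) : Prop := u.re = 0 ∧ ‖u‖ = 1

/-- `e^{θu} = cos θ + sin θ · u` for a pure unit quaternion `u`. -/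
def expQ (θ : ℝ) (u : ℍ[ℝ]) : ℍ[ℝ] := ((Real.cos θ : ℝ) : ℍ[ℝ]) + Real.sin θ • u

/-- Rodrigues formula: rotation of the pure quaternion `u` about the axis `v` (a pure unit
quaternion) by angle `ψ` (right-hand rule), expressed inside the quaternions, where the
cross product is `(v*u - u*v)/2` and the inner product is `-(v*u).re`. -/
def rot (ψ : ℝ) (v u : ℍ[ℝ]) : ℍ[ℝ] :=
  Real.cos ψ • u + Real.sin ψ • ((v * u - u * v) / 2)
    + ((1 - Real.cos ψ) * (-(v * u).re)) • v

lemma hdiv_aux (x : ℍ[ℝ]) : x / 2 = (2:ℝ)⁻¹ • x := by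
  have h : (2 : ℍ[ℝ]) = ((2:ℝ) : ℍ[ℝ]) := by
    have := Quaternion.coe_natCast (R := ℝ) 2
    push_cast at this
    exact this.symm
  rw [div_eq_mul_inv, h, ← Quaternion.coe_inv, Quaternion.mul_coe_eq_smul]

lemma pure_normSq_aux {v : ℍ[ℝ]} (hv : IsPureUnit v) :
    v.imI^2 + v.imJ^2 + v.imK^2 = 1 := by
  have h := hv.2
  have h2 : normSq v = 1 := by rw [normSq_eq_norm_mul_self, h]; ring
  rw [normSq_def'] at h2
  nlinarith [hv.1]

lemma key_aux (θ : ℝ) (u v : ℍ[ℝ]) (hu : IsPureUnit u) (hv : IsPureUnit v) :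
    expQ θ v * expQ θ (rot (2 * Real.pi - 2 * θ) v u) = expQ θ u * expQ θ v := by
  have hc : Real.cos (2 * Real.pi - 2 * θ) = 2 * Real.cos θ ^ 2 - 1 := by
    rw [Real.cos_sub, Real.cos_two_pi, Real.sin_two_pi, Real.cos_two_mul]; ring
  have hs : Real.sin (2 * Real.pi - 2 * θ) = -(2 * Real.sin θ * Real.cos θ) := by
    rw [Real.sin_sub, Real.cos_two_pi, Real.sin_two_pi, Real.sin_two_mul]; ring
  have hcs : Real.sin θ ^ 2 + Real.cos θ ^ 2 = 1 := Real.sin_sq_add_cos_sq θ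
  have hv2 := pure_normSq_aux hv
  obtain ⟨hu0, -⟩ := hu
  obtain ⟨hv0, -⟩ := hv
  ext <;>
    simp only [expQ, rot, hc, hs, hdiv_aux, Quaternion.re_add, Quaternion.imI_add,
      Quaternion.imJ_add, Quaternion.imK_add, Quaternion.re_mul, Quaternion.imI_mul,
      Quaternion.imJ_mul, Quaternion.imK_mul, Quaternion.re_smul, Quaternion.imI_smul,
      Quaternion.imJ_smul, Quaternion.imK_smul, Quaternion.re_coe, Quaternion.imI_coe,
      Quaternion.imJ_coe, Quaternion.imK_coe, Quaternion.re_sub, Quaternion.imI_sub,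
      Quaternion.imJ_sub, Quaternion.imK_sub, smul_eq_mul, hu0, hv0]
  · linear_combination
      (-2*Real.sin θ^2*v.imK*u.imK + 2*Real.sin θ^2*v.imK^3*u.imK - 2*Real.sin θ^2*v.imJ*u.imJ +
        2*Real.sin θ^2*v.imJ*v.imK^2*u.imJ + 2*Real.sin θ^2*v.imJ^2*v.imK*u.imK +
        2*Real.sin θ^2*v.imJ^3*u.imJ - 2*Real.sin θ^2*v.imI*u.imI +
        2*Real.sin θ^2*v.imI*v.imK^2*u.imI + 2*Real.sin θ^2*v.imI*v.imJ^2*u.imI +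
        2*Real.sin θ^2*v.imI^2*v.imK*u.imK + 2*Real.sin θ^2*v.imI^2*v.imJ*u.imJ +
        2*Real.sin θ^2*v.imI^3*u.imI) * hcs +
      (-2*Real.sin θ^4*v.imK*u.imK - 2*Real.sin θ^4*v.imJ*u.imJ - 2*Real.sin θ^4*v.imI*u.imI) * hv2
  · linear_combination
      (2*Real.cos θ*Real.sin θ*u.imI - 2*Real.cos θ*Real.sin θ*v.imI*v.imK*u.imK -
        2*Real.cos θ*Real.sin θ*v.imI*v.imJ*u.imJ - 2*Real.cos θ*Real.sin θ*v.imI^2*u.imI) * hcs +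
      (2*Real.cos θ*Real.sin θ^3*u.imI) * hv2
  · linear_combination
      (2*Real.cos θ*Real.sin θ*u.imJ - 2*Real.cos θ*Real.sin θ*v.imJ*v.imK*u.imK -
        2*Real.cos θ*Real.sin θ*v.imJ^2*u.imJ - 2*Real.cos θ*Real.sin θ*v.imI*v.imJ*u.imI) * hcs +
      (2*Real.cos θ*Real.sin θ^3*u.imJ) * hv2
  · linear_combination
      (2*Real.cos θ*Real.sin θ*u.imK - 2*Real.cos θ*Real.sin θ*v.imK^2*u.imK -
        2*Real.cos θ*Real.sin θ*v.imJ*v.imK*u.imJ - 2*Real.cos θ*Real.sin θ*v.imI*v.imK*u.imI) * hcs +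
      (2*Real.cos θ*Real.sin θ^3*u.imK) * hv2

lemma expQ_mul_neg_aux (θ : ℝ) (v : ℍ[ℝ]) (hv : IsPureUnit v) :
    expQ (-θ) v * expQ θ v = 1 := by
  have hcs : Real.sin θ ^ 2 + Real.cos θ ^ 2 = 1 := Real.sin_sq_add_cos_sq θ
  have hv2 := pure_normSq_aux hv
  obtain ⟨hv0, -⟩ := hv
  ext <;>
    simp only [expQ, Real.cos_neg, Real.sin_neg, Quaternion.re_add, Quaternion.imI_add,
      Quaternion.imJ_add, Quaternion.imK_add, Quaternion.re_mul, Quaternion.imI_mul,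
      Quaternion.imJ_mul, Quaternion.imK_mul, Quaternion.re_smul, Quaternion.imI_smul,
      Quaternion.imJ_smul, Quaternion.imK_smul, Quaternion.re_coe, Quaternion.imI_coe,
      Quaternion.imJ_coe, Quaternion.imK_coe, Quaternion.re_one, Quaternion.imI_one,
      Quaternion.imJ_one, Quaternion.imK_one, smul_eq_mul, hv0]
  · linear_combination hcs + (Real.sin θ ^ 2) * hv2
  · ring
  · ring
  · ring

lemma expQ_ne_zero_aux (θ : ℝ) (v : ℍ[ℝ]) (hv : IsPureUnit v) : expQ θ v ≠ 0 :=
  right_ne_zero_of_mul_eq_one (expQ_mul_neg_aux θ v hv)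

/-- For `0 < θ < π`, `u ↦ cos θ + sin θ · u` is a quandle isomorphism from `S²_ψ`,
`ψ = 2π - 2θ`, to the conjugacy class `C̃_θ` with conjugation operation `p * q = q⁻¹ p q`:
it intertwines the operations and is a bijection onto `C̃_θ`. -/
theorem stmt_8 (θ : ℝ) (h1 : 0 < θ) (h2 : θ < Real.pi) :
    (∀ u v : ℍ[ℝ], IsPureUnit u → IsPureUnit v →
      expQ θ (rot (2 * Real.pi - 2 * θ) v u) = (expQ θ v)⁻¹ * expQ θ u * expQ θ v) ∧
    Set.BijOn (fun u => expQ θ u) {u | IsPureUnit u}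
      {q : ℍ[ℝ] | ∃ v : ℍ[ℝ], IsPureUnit v ∧ q = expQ θ v} := by
  constructor
  · intro u v hu hv
    have hq := expQ_ne_zero_aux θ v hv
    rw [mul_assoc, eq_inv_mul_iff_mul_eq₀ hq]
    exact key_aux θ u v hu hv
  · refine ⟨fun u hu => ⟨u, hu, rfl⟩, fun u hu v hv h => ?_, fun q hq => ?_⟩
    · have hs : Real.sin θ ≠ 0 := ne_of_gt (Real.sin_pos_of_pos_of_lt_pi h1 h2)
      have h' : Real.sin θ • u = Real.sin θ • v := by
        have := h
        simp only [expQ] at this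
        exact add_left_cancel this
      exact smul_right_injective ℍ[ℝ] hs h'
    · obtain ⟨v, hv, rfl⟩ := hq
      exact ⟨v, hv, rfl⟩
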